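/- Let k ≥ 2 be an integer and let ν be the probability measure on ℝ given by the density x ↦ (1+x)^{−2} on (0,∞) with respect to Lebesgue measure. Let s₁, …, s_{k−1} ∈ (0,1) be pairwise distinct. Then, under the k-fold product measure ν^{⊗k} on ℝ^k, k · ν^{⊗k}( { x : x_i ≤ (1−s_i)·x_k for all i = 1, …, k−1 } ) = k·∏_{i=1}^{k−1} (s_i−1)/s_i − k·∑_{j=1}^{k−1} ((1−s_j)/s_j²)·(∏_{1≤i≤k−1, i≠j} (1−s_i)/(s_j−s_i))·log(1−s_j). -/

import Mathlib

open MeasureTheory Real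

section
open Finset
lemma partial_fraction (c : ℕ → ℝ) (S : Finset ℕ) (hc : ∀ i ∈ S, c i ≠ 0)
    (hd : ∀ i ∈ S, ∀ j ∈ S, i ≠ j → c i ≠ c j) :
    ∀ y : ℝ, (∀ i ∈ S, y + c i ≠ 0) →
    ∏ i ∈ S, y / (y + c i)
      = 1 + ∑ j ∈ S, (-(c j) * ∏ i ∈ S.erase j, c j / (c j - c i)) / (y + c j) := by
  induction S using Finset.induction_on with
  | empty => simp
  | @insert m S hm ih =>
    intro y hy
    have hcm : c m ≠ 0 := hc m (mem_insert_self m S)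
    have hcS : ∀ i ∈ S, c i ≠ 0 := fun i hi => hc i (mem_insert_of_mem hi)
    have hdS : ∀ i ∈ S, ∀ j ∈ S, i ≠ j → c i ≠ c j := fun i hi j hj =>
      hd i (mem_insert_of_mem hi) j (mem_insert_of_mem hj)
    have hyS : ∀ i ∈ S, y + c i ≠ 0 := fun i hi => hy i (mem_insert_of_mem hi)
    have hym : y + c m ≠ 0 := hy m (mem_insert_self m S)
    have hdm : ∀ i ∈ S, c i ≠ c m := by
      intro i hi
      exact hd i (mem_insert_of_mem hi) m (mem_insert_self m S)
        (fun h => hm (h ▸ hi))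
    set e : ℕ → ℝ := fun j => -(c j) * ∏ i ∈ S.erase j, c j / (c j - c i) with he
    have IH1 : ∏ i ∈ S, y / (y + c i) = 1 + ∑ j ∈ S, e j / (y + c j) :=
      ih hcS hdS y hyS
    have IH2' : ∏ i ∈ S, (-(c m)) / (-(c m) + c i)
        = 1 + ∑ j ∈ S, e j / (-(c m) + c j) := by
      refine ih hcS hdS (-(c m)) ?_
      intro i hi
      have := hdm i hi
      intro h; apply this; linarith
    have IH2 : ∏ i ∈ S, c m / (c m - c i) = 1 + ∑ j ∈ S, e j / (c j - c m) := by
      have p : ∏ i ∈ S, c m / (c m - c i) = ∏ i ∈ S, (-(c m)) / (-(c m) + c i) :=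
        Finset.prod_congr rfl fun i _ => by
          rw [show (-(c m) + c i) = -(c m - c i) by ring, neg_div_neg_eq]
      have q : ∑ j ∈ S, e j / (c j - c m) = ∑ j ∈ S, e j / (-(c m) + c j) :=
        Finset.sum_congr rfl fun j _ => by rw [sub_eq_neg_add]
      rw [p, q, IH2']
    rw [Finset.prod_insert hm, Finset.sum_insert hm, Finset.erase_insert hm]
    have hsum : ∑ j ∈ S, (-(c j) * ∏ i ∈ (insert m S).erase j, c j / (c j - c i)) / (y + c j)
        = ∑ j ∈ S, (e j * (c j / (c j - c m))) / (y + c j) := by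
      refine Finset.sum_congr rfl fun j hj => ?_
      have hjm : m ≠ j := fun h => hm (h ▸ hj)
      rw [Finset.erase_insert_of_ne hjm,
        Finset.prod_insert (fun h => hm (Finset.mem_of_mem_erase h))]
      simp only [he]
      ring
    rw [hsum, IH1, IH2]
    have per : ∀ j ∈ S, y / (y + c m) * (e j / (y + c j))
        = (e j * (c j / (c j - c m))) / (y + c j)
          - (e j / (c j - c m)) * (c m / (y + c m)) := by
      intro j hj
      have h1 : y + c j ≠ 0 := hyS j hj
      have h2 : c j - c m ≠ 0 := sub_ne_zero.mpr (hdm j hj)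
      field_simp
      ring
    rw [mul_add, mul_one, Finset.mul_sum, Finset.sum_congr rfl per,
      Finset.sum_sub_distrib, ← Finset.sum_mul]
    set A := ∑ j ∈ S, (e j * (c j / (c j - c m))) / (y + c j)
    set B := ∑ j ∈ S, e j / (c j - c m)
    field_simp
    ring

end

section
open Filter Topology
open Finset MeasureTheory Real Filter Set Topology

set_option maxHeartbeats 1000000 in
lemma key_integral (c : ℕ → ℝ) (S : Finset ℕ) (hc : ∀ i ∈ S, 1 < c i)
    (hd : ∀ i ∈ S, ∀ j ∈ S, i ≠ j → c i ≠ c j) :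
    IntegrableOn (fun y => (∏ i ∈ S, y / (y + c i)) * ((1 + y)^2)⁻¹) (Set.Ioi (0:ℝ)) ∧
    ∫ y in Set.Ioi (0:ℝ), (∏ i ∈ S, y / (y + c i)) * ((1 + y)^2)⁻¹
      = 1 + ∑ j ∈ S, (-(c j) * ∏ i ∈ S.erase j, c j / (c j - c i)) *
          (1 / (c j - 1) - Real.log (c j) / (c j - 1)^2) := by
  classical
  set e : ℕ → ℝ := fun j => -(c j) * ∏ i ∈ S.erase j, c j / (c j - c i) with he
  set g' : ℝ → ℝ := fun y => (∏ i ∈ S, y / (y + c i)) * ((1 + y)^2)⁻¹ with hg'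
  set G : ℝ → ℝ := fun y => -(1 + y)⁻¹ + ∑ j ∈ S,
      e j * ((Real.log (y + c j) - Real.log (1 + y)) / (c j - 1)^2
        - ((c j - 1) * (1 + y))⁻¹) with hG
  have hc0 : ∀ i ∈ S, c i ≠ 0 := fun i hi => by have := hc i hi; linarith
  -- the derivative of G
  have hder : ∀ x ∈ Set.Ici (0:ℝ), HasDerivAt G (g' x) x := by
    intro x hx
    have hx0 : (0:ℝ) ≤ x := hx
    have h1x : (0:ℝ) < 1 + x := by linarith
    have h1x' : (1:ℝ) + x ≠ 0 := ne_of_gt h1x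
    have t1 : HasDerivAt (fun y : ℝ => -(1 + y)⁻¹) (((1 + x)^2)⁻¹) x := by
      have h := (((hasDerivAt_id x).const_add 1).inv h1x').neg
      refine h.congr_deriv ?_
      simp only [id]
      field_simp
    have tj : ∀ j ∈ S, HasDerivAt
        (fun y => e j * ((Real.log (y + c j) - Real.log (1 + y)) / (c j - 1)^2
          - ((c j - 1) * (1 + y))⁻¹))
        (e j * (((x + c j) * (1 + x)^2)⁻¹)) x := by
      intro j hj
      have hcj : 1 < c j := hc j hj
      have hxc : (0:ℝ) < x + c j := by linarith
      have hxc' : x + c j ≠ 0 := ne_of_gt hxc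
      have hcj1 : c j - 1 ≠ 0 := by intro h; nlinarith [hcj]
      have l1 : HasDerivAt (fun y : ℝ => Real.log (y + c j)) (1 / (x + c j)) x :=
        ((hasDerivAt_id x).add_const (c j)).log hxc'
      have l2 : HasDerivAt (fun y : ℝ => Real.log (1 + y)) (1 / (1 + x)) x :=
        ((hasDerivAt_id x).const_add 1).log h1x'
      have l3 : HasDerivAt (fun y : ℝ => ((c j - 1) * (1 + y))⁻¹)
          (-(c j - 1) / ((c j - 1) * (1 + x))^2) x := by
        have hf : HasDerivAt (fun y : ℝ => (c j - 1) * (1 + y)) (c j - 1) x := by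
          have := ((hasDerivAt_id x).const_add 1).const_mul (c j - 1)
          simpa using this
        exact hf.inv (by positivity)
      have comb := (((l1.sub l2).div_const ((c j - 1)^2)).sub l3).const_mul (e j)
      refine comb.congr_deriv ?_
      field_simp
      ring
    have total := t1.fun_add (HasDerivAt.fun_sum tj)
    have : g' x = ((1 + x)^2)⁻¹ + ∑ j ∈ S, e j * (((x + c j) * (1 + x)^2)⁻¹) := by
      have hpf := partial_fraction c S hc0 hd x
        (fun i hi => by have := hc i hi; intro h; nlinarith)
      rw [hg']
      simp only
      rw [hpf, he]
      rw [add_mul, one_mul, Finset.sum_mul]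
      congr 1
      refine Finset.sum_congr rfl fun j hj => ?_
      have hcj : 1 < c j := hc j hj
      have hxc : x + c j ≠ 0 := by intro h; nlinarith
      have h1x' : (1:ℝ) + x ≠ 0 := by intro h; nlinarith
      field_simp
    rw [this]
    exact total
  -- nonnegativity
  have g'nn : ∀ x ∈ Set.Ioi (0:ℝ), 0 ≤ g' x := by
    intro x hx
    have hx0 : (0:ℝ) < x := hx
    have : 0 ≤ ∏ i ∈ S, x / (x + c i) := by
      refine Finset.prod_nonneg fun i hi => ?_
      have := hc i hi
      positivity
    positivity
  -- limit at infinity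
  have hlim : Tendsto G atTop (𝓝 0) := by
    have h1 : Tendsto (fun y : ℝ => 1 + y) atTop atTop :=
      tendsto_atTop_add_const_left _ 1 tendsto_id
    have hbase : Tendsto (fun y : ℝ => -(1 + y)⁻¹) atTop (𝓝 0) := by
      simpa using (h1.inv_tendsto_atTop).neg
    have hterm : ∀ j ∈ S, Tendsto (fun y : ℝ =>
        e j * ((Real.log (y + c j) - Real.log (1 + y)) / (c j - 1)^2
          - ((c j - 1) * (1 + y))⁻¹)) atTop (𝓝 0) := by
      intro j hj
      have hcj : 1 < c j := hc j hj
      have hcj1 : c j - 1 ≠ 0 := by intro h; nlinarith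
      have hlog : Tendsto (fun y : ℝ => Real.log (y + c j) - Real.log (1 + y))
          atTop (𝓝 0) := by
        have hq : Tendsto (fun y : ℝ => (y + c j) / (1 + y)) atTop (𝓝 1) := by
          have ha : Tendsto (fun y : ℝ => 1 + (c j - 1) / (1 + y)) atTop (𝓝 (1 + 0)) :=
            tendsto_const_nhds.add (tendsto_const_nhds.div_atTop h1)
          rw [add_zero] at ha
          refine ha.congr' ?_
          filter_upwards [eventually_gt_atTop (0:ℝ)] with y hy
          have : (1:ℝ) + y ≠ 0 := by nlinarith
          field_simp
          ring
        have hcont : Tendsto (fun t : ℝ => Real.log t) (𝓝 1) (𝓝 0) := by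
          simpa using (Real.continuousAt_log one_ne_zero).tendsto
        have := hcont.comp hq
        refine this.congr' ?_
        filter_upwards [eventually_gt_atTop (0:ℝ)] with y hy
        have h1y : (0:ℝ) < 1 + y := by linarith
        have h2y : (0:ℝ) < y + c j := by nlinarith
        simp only [Function.comp_apply]
        rw [Real.log_div (ne_of_gt h2y) (ne_of_gt h1y)]
      have hinv : Tendsto (fun y : ℝ => ((c j - 1) * (1 + y))⁻¹) atTop (𝓝 0) := by
        have : Tendsto (fun y : ℝ => (c j - 1) * (1 + y)) atTop atTop :=
          h1.const_mul_atTop (by nlinarith)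
        exact this.inv_tendsto_atTop
      have := ((hlog.div_const ((c j - 1)^2)).sub hinv).const_mul (e j)
      simpa using this
    have hsum : Tendsto (fun y : ℝ => ∑ j ∈ S,
        e j * ((Real.log (y + c j) - Real.log (1 + y)) / (c j - 1)^2
          - ((c j - 1) * (1 + y))⁻¹)) atTop (𝓝 0) := by
      have := tendsto_finset_sum S hterm
      simpa using this
    have h := hbase.add hsum
    rw [add_zero] at h
    exact h
  constructor
  · exact integrableOn_Ioi_deriv_of_nonneg' hder g'nn hlim
  · rw [integral_Ioi_of_hasDerivAt_of_nonneg' hder g'nn hlim]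
    have hG0 : G 0 = -1 + ∑ j ∈ S, -((-(c j) * ∏ i ∈ S.erase j, c j / (c j - c i)) *
        (1 / (c j - 1) - Real.log (c j) / (c j - 1)^2)) := by
      simp only [hG, zero_add, add_zero, Real.log_one, mul_one, inv_one]
      congr 1
      refine Finset.sum_congr rfl fun j hj => ?_
      have hcj : 1 < c j := hc j hj
      have hcj1 : c j - 1 ≠ 0 := by intro h; nlinarith
      simp only [he]
      field_simp
      ring
    rw [hG0, Finset.sum_neg_distrib]
    ring

end

lemma f_measurable : Measurable (fun x : ℝ =>
    ENNReal.ofReal (if 0 < x then ((1 + x) ^ 2)⁻¹ else 0)) := by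
  apply Measurable.ennreal_ofReal
  apply Measurable.ite
  · exact measurableSet_lt measurable_const measurable_id
  · exact ((measurable_const.add measurable_id).pow measurable_const).inv
  · exact measurable_const

lemma nu_Iic_zero :
    (volume.withDensity fun x : ℝ =>
        ENNReal.ofReal (if 0 < x then ((1 + x) ^ 2)⁻¹ else 0)) (Set.Iic 0) = 0 := by
  rw [withDensity_apply _ measurableSet_Iic]
  have h : ∀ᵐ x ∂(volume.restrict (Set.Iic (0:ℝ))),
      ENNReal.ofReal (if 0 < x then ((1 + x) ^ 2)⁻¹ else 0) = 0 := by
    filter_upwards [ae_restrict_mem measurableSet_Iic] with x hx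
    have : ¬ (0 < x) := not_lt.mpr hx
    simp [this]
  rw [lintegral_congr_ae h, lintegral_zero]

lemma nu_Iic (t : ℝ) (ht : 0 ≤ t) :
    (volume.withDensity fun x : ℝ =>
        ENNReal.ofReal (if 0 < x then ((1 + x) ^ 2)⁻¹ else 0)) (Set.Iic t)
      = ENNReal.ofReal (t / (1 + t)) := by
  have hsplit : Set.Iic t = Set.Iic 0 ∪ Set.Ioc 0 t := by
    ext x; simp only [Set.mem_Iic, Set.mem_union, Set.mem_Ioc]
    constructor
    · intro h; rcases le_or_gt x 0 with h0 | h0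
      · exact Or.inl h0
      · exact Or.inr ⟨h0, h⟩
    · rintro (h | ⟨_, h⟩)
      · linarith
      · exact h
  have hdisj : Disjoint (Set.Iic (0:ℝ)) (Set.Ioc 0 t) :=
    Set.disjoint_left.mpr fun x hx hx' => absurd hx'.1 (not_lt.mpr hx)
  rw [hsplit, measure_union hdisj measurableSet_Ioc, nu_Iic_zero, zero_add]
  rw [withDensity_apply _ measurableSet_Ioc]
  have h : ∀ᵐ x ∂(volume.restrict (Set.Ioc (0:ℝ) t)),
      ENNReal.ofReal (if 0 < x then ((1 + x) ^ 2)⁻¹ else 0)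
        = ENNReal.ofReal ((1 + x) ^ 2)⁻¹ := by
    filter_upwards [ae_restrict_mem measurableSet_Ioc] with x hx
    simp only [if_pos hx.1]
  rw [lintegral_congr_ae h]
  have hcont : ContinuousOn (fun x : ℝ => ((1 + x) ^ 2)⁻¹) (Set.Icc 0 t) := by
    apply ContinuousOn.inv₀
    · exact ((continuousOn_const).add continuousOn_id).pow 2
    · intro x hx
      have : (0:ℝ) < 1 + x := by have := hx.1; linarith
      positivity
  have hint : IntegrableOn (fun x : ℝ => ((1 + x) ^ 2)⁻¹) (Set.Ioc 0 t) :=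
    (hcont.integrableOn_Icc).mono_set Set.Ioc_subset_Icc_self
  rw [← ofReal_integral_eq_lintegral_ofReal hint
    (ae_of_all _ (fun x => by positivity))]
  congr 1
  rw [← intervalIntegral.integral_of_le ht]
  have : ∫ x in (0:ℝ)..t, ((1 + x) ^ 2)⁻¹ = (-(1 + t)⁻¹) - (-(1 + 0)⁻¹) := by
    apply intervalIntegral.integral_eq_sub_of_hasDerivAt
    · intro x hx
      rw [Set.uIcc_of_le ht] at hx
      have h1x : (1:ℝ) + x ≠ 0 := by have := hx.1; intro h; nlinarith
      have h := (((hasDerivAt_id x).const_add 1).inv h1x).neg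
      convert h using 1
      · rfl
      simp only [id]
      field_simp
    · apply ContinuousOn.intervalIntegrable
      rw [Set.uIcc_of_le ht]
      exact hcont
  rw [this]
  have h1t : (1:ℝ) + t ≠ 0 := by positivity
  field_simp
  ring

lemma final_algebra (n : ℕ) (s : ℕ → ℝ) (c : ℕ → ℝ)
    (hceq : ∀ i ∈ Finset.Ico 1 (n+1), c i = (1 - s i)⁻¹)
    (hmem : ∀ i ∈ Finset.Ico 1 (n+1), 0 < s i ∧ s i < 1)
    (hdist : ∀ i ∈ Finset.Ico 1 (n+1), ∀ j ∈ Finset.Ico 1 (n+1), i ≠ j → s i ≠ s j) :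
    1 + ∑ j ∈ Finset.Ico 1 (n+1),
        (-(c j) * ∏ i ∈ (Finset.Ico 1 (n+1)).erase j, c j / (c j - c i)) *
          (1 / (c j - 1) - Real.log (c j) / (c j - 1)^2)
      = ∏ i ∈ Finset.Ico 1 (n+1), (s i - 1) / s i
        - ∑ j ∈ Finset.Ico 1 (n+1),
            ((1 - s j) / (s j)^2) *
              (∏ i ∈ (Finset.Ico 1 (n+1)).erase j, (1 - s i) / (s j - s i)) *
                Real.log (1 - s j) := by
  classical
  set T := Finset.Ico 1 (n+1) with hTdef
  have hs0 : ∀ i ∈ T, s i ≠ 0 := fun i hi => ne_of_gt (hmem i hi).1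
  have hs1 : ∀ i ∈ T, (0:ℝ) < 1 - s i := fun i hi => by have := (hmem i hi).2; linarith
  have hc0 : ∀ i ∈ T, c i ≠ 0 := fun i hi => by
    rw [hceq i hi]; exact inv_ne_zero (ne_of_gt (hs1 i hi))
  have hcd : ∀ i ∈ T, ∀ j ∈ T, i ≠ j → c i ≠ c j := by
    intro i hi j hj hij
    rw [hceq i hi, hceq j hj]
    intro h
    have h2 : 1 - s i = 1 - s j := inv_injective h
    exact hdist i hi j hj hij (by linarith)
  have hcm1eq : ∀ i ∈ T, c i - 1 = s i / (1 - s i) := by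
    intro i hi
    have h2 := ne_of_gt (hs1 i hi)
    rw [hceq i hi]
    field_simp
    ring
  have hcm1 : ∀ i ∈ T, c i - 1 ≠ 0 := fun i hi => by
    rw [hcm1eq i hi]
    exact div_ne_zero (hs0 i hi) (ne_of_gt (hs1 i hi))
  -- partial fraction identity at y = -1
  have hpf := partial_fraction c T hc0 hcd (-1) (by
    intro i hi
    have h := hcm1 i hi
    intro h2; apply h; linarith)
  have h1 : ∏ i ∈ T, (s i - 1) / s i
      = 1 + ∑ j ∈ T, (-(c j) * ∏ i ∈ T.erase j, c j / (c j - c i)) / (c j - 1) := by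
    have p : ∏ i ∈ T, (s i - 1) / s i = ∏ i ∈ T, (-1 : ℝ) / (-1 + c i) := by
      refine Finset.prod_congr rfl fun i hi => ?_
      have h0 := hs0 i hi
      have h2 := ne_of_gt (hs1 i hi)
      rw [hceq i hi]
      field_simp
      rw [show -(1 - s i) + 1 = s i by ring, mul_div_cancel_left₀ _ h0]
      ring
    rw [p, hpf]
    congr 1
    refine Finset.sum_congr rfl fun j hj => ?_
    rw [sub_eq_neg_add]
  -- rewrite the inner products
  have hprodj : ∀ j ∈ T, ∏ i ∈ T.erase j, c j / (c j - c i)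
      = ∏ i ∈ T.erase j, (1 - s i) / (s j - s i) := by
    intro j hj
    refine Finset.prod_congr rfl fun i hi => ?_
    have hiT : i ∈ T := Finset.mem_of_mem_erase hi
    have hij : i ≠ j := Finset.ne_of_mem_erase hi
    have hsij : s j - s i ≠ 0 := sub_ne_zero.mpr (Ne.symm (hdist i hiT j hj hij))
    have h2i := ne_of_gt (hs1 i hiT)
    have h2j := ne_of_gt (hs1 j hj)
    rw [hceq j hj, hceq i hiT]
    rw [div_eq_div_iff (by
      rw [← hceq j hj, ← hceq i hiT]
      exact sub_ne_zero.mpr (hcd j hj i hiT (Ne.symm hij))) hsij]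
    field_simp
    ring
  -- per-term identity for the sum
  have hterm : ∀ j ∈ T,
      (-(c j) * ∏ i ∈ T.erase j, c j / (c j - c i)) *
          (1 / (c j - 1) - Real.log (c j) / (c j - 1)^2)
        = (-(c j) * ∏ i ∈ T.erase j, c j / (c j - c i)) / (c j - 1)
          - ((1 - s j) / (s j)^2) *
              (∏ i ∈ T.erase j, (1 - s i) / (s j - s i)) * Real.log (1 - s j) := by
    intro j hj
    rw [hprodj j hj]
    set P := ∏ i ∈ T.erase j, (1 - s i) / (s j - s i)
    have hlog : Real.log (c j) = -Real.log (1 - s j) := by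
      rw [hceq j hj, Real.log_inv]
    rw [hlog, hceq j hj]
    have h0 := hs0 j hj
    have h2 := ne_of_gt (hs1 j hj)
    field_simp
    ring_nf
    field_simp
    ring
  rw [Finset.sum_congr rfl hterm, Finset.sum_sub_distrib, ← add_sub_assoc, ← h1]

/-- Theorem 2.6 (construction of the critical scaling limit): let `ν` be the law on `ℝ`
with density `(1+x)⁻²` on `(0,∞)`.  For pairwise distinct `s₁, …, s_{k−1} ∈ (0,1)`,
under the `k`-fold product `ν^{⊗k}`,
`k · ν^{⊗k}{x : xᵢ ≤ (1−sᵢ)x_k, i = 1,…,k−1}`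
equals the limiting joint distribution function of the critical split times:
`k ∏_{i=1}^{k−1} (sᵢ−1)/sᵢ − k ∑_{j=1}^{k−1} ((1−s_j)/s_j²)(∏_{i≠j}(1−sᵢ)/(s_j−sᵢ)) log(1−s_j)`.
(Coordinates are indexed by `Fin k`, with `x i` for `0 ≤ i ≤ k−2` playing the role of
`x_{i+1}` and `x ⟨k−1⟩` that of `x_k`.) -/
theorem critical_genealogy_construction
    (k : ℕ) (hk : 2 ≤ k) (s : ℕ → ℝ)
    (hs : ∀ i ∈ Finset.Ico 1 k, s i ∈ Set.Ioo (0 : ℝ) 1)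
    (hdist : ∀ i ∈ Finset.Ico 1 k, ∀ j ∈ Finset.Ico 1 k, i ≠ j → s i ≠ s j) :
    (k : ℝ) *
        ((Measure.pi fun _ : Fin k =>
            volume.withDensity fun x : ℝ =>
              ENNReal.ofReal (if 0 < x then ((1 + x) ^ 2)⁻¹ else 0))
          {x : Fin k → ℝ | ∀ i : Fin k, (i : ℕ) + 1 < k →
            x i ≤ (1 - s ((i : ℕ) + 1)) * x ⟨k - 1, by omega⟩}).toReal
      = (k : ℝ) * ∏ i ∈ Finset.Ico 1 k, (s i - 1) / s i
        - (k : ℝ) * ∑ j ∈ Finset.Ico 1 k,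
            ((1 - s j) / (s j) ^ 2) *
              (∏ i ∈ (Finset.Ico 1 k).erase j, (1 - s i) / (s j - s i)) *
                Real.log (1 - s j) := by
  classical
  obtain ⟨n, rfl⟩ : ∃ n, k = n + 1 := ⟨k - 1, by omega⟩
  have hmem : ∀ i ∈ Finset.Ico 1 (n+1), 0 < s i ∧ s i < 1 := fun i hi =>
    ⟨(hs i hi).1, (hs i hi).2⟩
  set c : ℕ → ℝ := fun i => (1 - s i)⁻¹ with hcdef
  have hceq : ∀ i ∈ Finset.Ico 1 (n+1), c i = (1 - s i)⁻¹ := fun i _ => rfl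
  have hs1 : ∀ i ∈ Finset.Ico 1 (n+1), (0:ℝ) < 1 - s i := fun i hi => by
    have := (hmem i hi).2; linarith
  have hc1 : ∀ i ∈ Finset.Ico 1 (n+1), 1 < c i := by
    intro i hi
    obtain ⟨h0, h1⟩ := hmem i hi
    have h2 := hs1 i hi
    rw [hceq i hi]
    rw [one_lt_inv_iff₀]
    exact ⟨h2, by linarith⟩
  have hcd : ∀ i ∈ Finset.Ico 1 (n+1), ∀ j ∈ Finset.Ico 1 (n+1), i ≠ j → c i ≠ c j := by
    intro i hi j hj hij
    rw [hceq i hi, hceq j hj]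
    intro h
    have h2 : 1 - s i = 1 - s j := inv_injective h
    exact hdist i hi j hj hij (by linarith)
  have hjm : ∀ j : Fin n, (j:ℕ) + 1 ∈ Finset.Ico 1 (n+1) := fun j =>
    Finset.mem_Ico.mpr ⟨by omega, by have := j.isLt; omega⟩
  set ν : Measure ℝ := volume.withDensity
      (fun x : ℝ => ENNReal.ofReal (if 0 < x then ((1 + x) ^ 2)⁻¹ else 0)) with hν
  haveI hsf : SigmaFinite ν := SigmaFinite.withDensity_ofReal _
  set T : Set (ℝ × (Fin n → ℝ)) :=
      {p | ∀ j : Fin n, p.2 j ≤ (1 - s ((j:ℕ) + 1)) * p.1} with hT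
  have hTm : MeasurableSet T := by
    have : T = ⋂ j : Fin n, {p : ℝ × (Fin n → ℝ) | p.2 j ≤ (1 - s ((j:ℕ) + 1)) * p.1} := by
      ext p; simp [hT, Set.mem_iInter]
    rw [this]
    refine MeasurableSet.iInter fun j => measurableSet_le ?_ ?_
    · exact (measurable_pi_apply j).comp measurable_snd
    · exact measurable_fst.const_mul _
  set E := MeasurableEquiv.piFinSuccAbove (fun _ : Fin (n+1) => ℝ) (Fin.last n) with hE
  have hEapp : ∀ x : Fin (n+1) → ℝ,
      E x = (x (Fin.last n), fun j : Fin n => x ((Fin.last n).succAbove j)) := fun x => rfl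
  have hlast : (⟨n + 1 - 1, by omega⟩ : Fin (n+1)) = Fin.last n := by
    ext; simp [Fin.last]
  have step0 : {x : Fin (n+1) → ℝ | ∀ i : Fin (n+1), (i : ℕ) + 1 < n + 1 →
      x i ≤ (1 - s ((i : ℕ) + 1)) * x ⟨n + 1 - 1, by omega⟩} = E ⁻¹' T := by
    ext x
    rw [Set.mem_preimage, hEapp, hT]
    simp only [Set.mem_setOf_eq, Fin.succAbove_last, hlast]
    constructor
    · intro h j
      have hj1 : ((j.castSucc : Fin (n+1)) : ℕ) + 1 < n + 1 := by
        simp only [Fin.coe_castSucc]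
        have := j.isLt; omega
      have := h j.castSucc hj1
      simpa [Fin.coe_castSucc] using this
    · intro h i hi
      have hin : (i : ℕ) < n := by omega
      have := h ⟨i, hin⟩
      have hcast : (Fin.castSucc ⟨(i:ℕ), hin⟩) = i := by
        ext; simp [Fin.castSucc, Fin.castAdd, Fin.castLE]
      rw [hcast] at this
      simpa using this
  have m1 : (Measure.pi fun _ : Fin (n+1) => ν) (E ⁻¹' T)
      = (ν.prod (Measure.pi fun _ : Fin n => ν)) T := by
    have hmp := measurePreserving_piFinSuccAbove (fun _ : Fin (n+1) => ν) (Fin.last n)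
    exact hmp.measure_preimage hTm.nullMeasurableSet
  have m2 : (ν.prod (Measure.pi fun _ : Fin n => ν)) T
      = ∫⁻ y, ∏ j : Fin n, ν (Set.Iic ((1 - s ((j:ℕ) + 1)) * y)) ∂ν := by
    rw [Measure.prod_apply hTm]
    refine lintegral_congr fun y => ?_
    have hpre : Prod.mk y ⁻¹' T
        = Set.pi Set.univ (fun j : Fin n => Set.Iic ((1 - s ((j:ℕ) + 1)) * y)) := by
      ext z
      simp [hT, Set.mem_univ_pi, Pi.le_def]
    rw [hpre, Measure.pi_pi]
  have m3 : ∫⁻ y, ∏ j : Fin n, ν (Set.Iic ((1 - s ((j:ℕ) + 1)) * y)) ∂ν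
      = ∫⁻ y, ENNReal.ofReal
          (∏ j : Fin n, ((1 - s ((j:ℕ) + 1)) * y) / (1 + (1 - s ((j:ℕ) + 1)) * y)) ∂ν := by
    apply lintegral_congr_ae
    have h0 : ν (Set.Iic 0) = 0 := nu_Iic_zero
    have hmemae : ∀ᵐ y ∂ν, 0 < y := by
      rw [ae_iff]
      have heq : {y : ℝ | ¬ 0 < y} = Set.Iic 0 := by ext y; simp [not_lt]
      rw [heq]; exact h0
    filter_upwards [hmemae] with y hy
    rw [ENNReal.ofReal_prod_of_nonneg (fun j _ => by
      have h1 := hs1 _ (hjm j)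
      have h2 : (0:ℝ) < 1 + (1 - s ((j:ℕ) + 1)) * y := by nlinarith
      positivity)]
    refine Finset.prod_congr rfl fun j _ => ?_
    have h1 := hs1 _ (hjm j)
    exact nu_Iic _ (by positivity)
  have hg : Measurable (fun y : ℝ => ENNReal.ofReal
      (∏ j : Fin n, ((1 - s ((j:ℕ) + 1)) * y) / (1 + (1 - s ((j:ℕ) + 1)) * y))) := by
    apply Measurable.ennreal_ofReal
    apply Finset.measurable_prod
    intro j _
    exact (measurable_const.mul measurable_id).div
      (measurable_const.add (measurable_const.mul measurable_id))
  set ψ : ℝ → ℝ := fun y => (∏ i ∈ Finset.Ico 1 (n+1), y / (y + c i)) * ((1 + y) ^ 2)⁻¹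
    with hψ
  have hconv : ∀ y : ℝ, 0 < y →
      ∏ j : Fin n, ((1 - s ((j:ℕ) + 1)) * y) / (1 + (1 - s ((j:ℕ) + 1)) * y)
        = ∏ i ∈ Finset.Ico 1 (n+1), y / (y + c i) := by
    intro y hy
    rw [Fin.prod_univ_eq_prod_range (fun m => ((1 - s (m + 1)) * y) / (1 + (1 - s (m + 1)) * y)) n]
    rw [Finset.prod_Ico_eq_prod_range]
    simp only [Nat.add_sub_cancel]
    refine Finset.prod_congr rfl fun m hm => ?_
    have hmn : m < n := Finset.mem_range.mp hm
    have hmI : m + 1 ∈ Finset.Ico 1 (n+1) := Finset.mem_Ico.mpr ⟨by omega, by omega⟩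
    rw [show 1 + m = m + 1 by omega]
    have h1 := hs1 _ hmI
    have hc := hc1 _ hmI
    have h2 : (0:ℝ) < 1 + (1 - s (m + 1)) * y := by nlinarith
    have h3 : (0:ℝ) < y + c (m + 1) := by nlinarith
    rw [hceq _ hmI]
    rw [hceq _ hmI] at h3
    field_simp
    ring
  have m4 : ∫⁻ y, ENNReal.ofReal
        (∏ j : Fin n, ((1 - s ((j:ℕ) + 1)) * y) / (1 + (1 - s ((j:ℕ) + 1)) * y)) ∂ν
      = ∫⁻ y in Set.Ioi 0, ENNReal.ofReal (ψ y) ∂volume := by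
    rw [hν, lintegral_withDensity_eq_lintegral_mul volume f_measurable hg]
    have hfg : ∀ y : ℝ, ((fun x : ℝ => ENNReal.ofReal (if 0 < x then ((1 + x) ^ 2)⁻¹ else 0)) *
        (fun y : ℝ => ENNReal.ofReal
          (∏ j : Fin n, ((1 - s ((j:ℕ) + 1)) * y) / (1 + (1 - s ((j:ℕ) + 1)) * y)))) y
        = (Set.Ioi (0:ℝ)).indicator (fun y => ENNReal.ofReal (ψ y)) y := by
      intro y
      simp only [Pi.mul_apply]
      by_cases hy : 0 < y
      · rw [if_pos hy, Set.indicator_of_mem (by exact hy)]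
        rw [← ENNReal.ofReal_mul (by positivity)]
        congr 1
        rw [hψ]
        simp only
        rw [hconv y hy]
        ring
      · rw [if_neg hy, Set.indicator_of_notMem (by exact hy)]
        simp
    rw [lintegral_congr hfg, lintegral_indicator measurableSet_Ioi]
  obtain ⟨hint, hval⟩ := key_integral c (Finset.Ico 1 (n+1)) hc1 hcd
  have hψnn : ∀ y ∈ Set.Ioi (0:ℝ), 0 ≤ ψ y := by
    intro y hy
    have hy0 : (0:ℝ) < y := hy
    have hp : 0 ≤ ∏ i ∈ Finset.Ico 1 (n+1), y / (y + c i) := by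
      refine Finset.prod_nonneg fun i hi => ?_
      have := hc1 i hi
      positivity
    rw [hψ]
    simp only
    positivity
  have m5 : ∫⁻ y in Set.Ioi (0:ℝ), ENNReal.ofReal (ψ y) ∂volume
      = ENNReal.ofReal (∫ y in Set.Ioi (0:ℝ), ψ y) := by
    refine (ofReal_integral_eq_lintegral_ofReal hint ?_).symm
    filter_upwards [ae_restrict_mem measurableSet_Ioi] with y hy
    exact hψnn y hy
  have hseq : {x : Fin (n+1) → ℝ | ∀ i : Fin (n+1), (i : ℕ) + 1 < n + 1 →
      x i ≤ (1 - s ((i : ℕ) + 1)) * x ⟨n + 1 - 1, by omega⟩} = E ⁻¹' T := step0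
  rw [hseq, m1, m2, m3, m4, m5]
  rw [ENNReal.toReal_ofReal (setIntegral_nonneg measurableSet_Ioi hψnn)]
  have hval' : ∫ y in Set.Ioi (0:ℝ), ψ y
      = 1 + ∑ j ∈ Finset.Ico 1 (n+1), (-(c j) * ∏ i ∈ (Finset.Ico 1 (n+1)).erase j,
          c j / (c j - c i)) * (1 / (c j - 1) - Real.log (c j) / (c j - 1)^2) := hval
  rw [hval', final_algebra n s c hceq hmem hdist]
  ring
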